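/- Let V be a finite-dimensional real inner product space and let S be a nonzero symmetric endomorphism of V such that for some nonzero v ∈ V, ⟨S y, y⟩ = 0 for all y orthogonal to v. Then there exists t ∈ V with S = t ⊗ v* + v ⊗ t*, i.e., S y = ⟨v,y⟩ t + ⟨t,y⟩ v for all y ∈ V. -/

import Mathlib

open scoped RealInnerProductSpace

theorem stmt_19 (V : Type*) [NormedAddCommGroup V] [InnerProductSpace ℝ V]
    [FiniteDimensional ℝ V] (S : V →ₗ[ℝ] V) (hS : ∀ x y : V, ⟪S x, y⟫ = ⟪x, S y⟫)
    (hS0 : S ≠ 0) (v : V) (hv : v ≠ 0)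
    (h : ∀ y : V, ⟪v, y⟫ = 0 → ⟪S y, y⟫ = 0) :
    ∃ t : V, ∀ y : V, S y = ⟪v, y⟫ • t + ⟪t, y⟫ • v := by
  have hn : (⟪v, v⟫ : ℝ) ≠ 0 := fun h' => hv (inner_self_eq_zero.mp h')
  -- polarization: the bilinear form vanishes on the orthogonal complement of v
  have hB : ∀ x y : V, ⟪v, x⟫ = 0 → ⟪v, y⟫ = 0 → ⟪S x, y⟫ = 0 := by
    intro x y hx0 hy0
    have hx := h x hx0
    have hy := h y hy0
    have hxy : ⟪S (x + y), x + y⟫ = 0 := by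
      apply h
      rw [inner_add_right, hx0, hy0]; ring
    have hsymm : ⟪S y, x⟫ = ⟪S x, y⟫ := by
      rw [hS y x, real_inner_comm]
    rw [map_add, inner_add_left, inner_add_right, inner_add_right] at hxy
    linarith
  -- S maps the orthogonal complement of v into the span of v
  have key : ∀ w : V, ⟪v, w⟫ = 0 → S w = (⟪S v, w⟫ / ⟪v, v⟫) • v := by
    intro w hw
    have hcv : ⟪S w, v⟫ = ⟪S v, w⟫ := by
      rw [hS w v, real_inner_comm]
    set c : ℝ := ⟪S v, w⟫ / ⟪v, v⟫ with hc
    set u : V := S w - c • v with hu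
    have hvu : ⟪v, u⟫ = 0 := by
      rw [hu, inner_sub_right, real_inner_smul_right, hc, ← hS v w]
      field_simp
      ring
    have h0 : ⟪S w, u⟫ = 0 := hB w u hw hvu
    have huu : ⟪u, u⟫ = 0 := by
      have e : ⟪u, u⟫ = ⟪S w, u⟫ - c * ⟪v, u⟫ := by
        rw [hu, inner_sub_left, real_inner_smul_left]
      rw [e, h0, hvu]; ring
    have hu0 : u = 0 := inner_self_eq_zero.mp huu
    rw [hu] at hu0
    exact sub_eq_zero.mp hu0
  -- define t
  refine ⟨(⟪v, v⟫)⁻¹ • S v - (⟪v, S v⟫ / (2 * ⟪v, v⟫ ^ 2)) • v, ?_⟩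
  intro y
  set n : ℝ := ⟪v, v⟫ with hndef
  set α : ℝ := ⟪v, y⟫ / n with hα
  have hw : ⟪v, y - α • v⟫ = 0 := by
    rw [inner_sub_right, real_inner_smul_right, hα]
    field_simp
    rw [hndef]; ring
  have hdec : S y = α • S v + S (y - α • v) := by
    have : y = α • v + (y - α • v) := by abel
    conv_lhs => rw [this]
    rw [map_add, map_smul]
  rw [hdec, key _ hw]
  have hSvw : ⟪S v, y - α • v⟫ = ⟪S v, y⟫ - α * ⟪S v, v⟫ := by
    rw [inner_sub_right, real_inner_smul_right]
  have hsv : ⟪S v, v⟫ = ⟪v, S v⟫ := hS v v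
  rw [hSvw, inner_sub_left, real_inner_smul_left, real_inner_smul_left]
  rw [hsv]
  match_scalars
  · rw [hα]; field_simp
  · rw [hα]; field_simp; ring
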